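/- Let τ₁, τ₂, τ₃ be permutations of a finite nonempty set Γ = mov(τ₁) ∪ mov(τ₂) ∪ mov(τ₃) satisfying (T1) τ₁τ₂τ₃ = 1, (T3) each τ_i is fixed-point-free on Γ, and (T4) ⟨τ₁,τ₂,τ₃⟩ is transitive on Γ. Then z(τ₁) + z(τ₂) + z(τ₃) ≤ |Γ| + 2 and z(τ₁) + z(τ₂) + z(τ₃) ≡ |Γ| (mod 2), where z(σ) denotes the number of cycles of σ. (Equivalently, the genus g defined by Euler's formula order = size + 2 − 2g is a nonnegative integer.) -/

import Mathlib

/-- The set of points moved by a permutation. -/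
def mov (σ : Equiv.Perm ℕ) : Set ℕ := {x | σ x ≠ x}

/-- The underlying set `Γ = mov(τ₁) ∪ mov(τ₂) ∪ mov(τ₃)` of a triple of permutations. -/
def Gam (τ : Fin 3 → Equiv.Perm ℕ) : Set ℕ := mov (τ 0) ∪ mov (τ 1) ∪ mov (τ 2)

/-- A bitrade in τ-representation: a triple `[τ₁, τ₂, τ₃]` of permutations of the
finite set `Γ = mov(τ₁) ∪ mov(τ₂) ∪ mov(τ₃)` (all permutations composed left to
right) satisfying (T1) `τ₁τ₂τ₃ = 1`, (T2) any cycle of `τ_i` and any cycle of `τ_j`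
(`i < j`) move at most one common point, and (T3) each `τ_i` is fixed-point-free
on `Γ`. -/
structure IsTauRep (τ : Fin 3 → Equiv.Perm ℕ) : Prop where
  fin : (Gam τ).Finite
  t1 : ∀ x, τ 2 (τ 1 (τ 0 x)) = x
  t2 : ∀ i j : Fin 3, i < j → ∀ x y : ℕ, x ≠ y →
    ¬((τ i).SameCycle x y ∧ (τ j).SameCycle x y)
  t3 : ∀ i : Fin 3, ∀ x ∈ Gam τ, τ i x ≠ x

/-- The same-cycle setoid on the set of points moved by `σ`;
its classes are the (nontrivial) cycles of `σ`. -/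
def cycSetoidOn (σ : Equiv.Perm ℕ) : Setoid (mov σ) :=
  ⟨fun a b => σ.SameCycle a.1 b.1,
    ⟨fun a => Equiv.Perm.SameCycle.refl σ a.1,
     fun h => h.symm, fun h h' => h.trans h'⟩⟩

/-- `zc σ` is the number of cycles of `σ`. -/
noncomputable def zc (σ : Equiv.Perm ℕ) : ℕ := Nat.card (Quotient (cycSetoidOn σ))

/-- (T4): the group `⟨τ₁, τ₂, τ₃⟩` acts transitively on `Γ`. -/
def TransOn (τ : Fin 3 → Equiv.Perm ℕ) : Prop :=
  ∀ x ∈ Gam τ, ∀ y ∈ Gam τ,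
    ∃ g ∈ Subgroup.closure ({τ 0, τ 1, τ 2} : Set (Equiv.Perm ℕ)), g x = y

/-- A spherical bitrade in τ-representation: (T4) holds and the genus defined by
Euler's formula `order = size + 2 - 2g` is zero. -/
def Spherical (τ : Fin 3 → Equiv.Perm ℕ) : Prop :=
  IsTauRep τ ∧ TransOn τ ∧
    zc (τ 0) + zc (τ 1) + zc (τ 2) = Nat.card (Gam τ) + 2

/-- A bitrade in τ-representation is bicyclic if some `τ_j` has exactly two cycles. -/
def Bicyclic (τ : Fin 3 → Equiv.Perm ℕ) : Prop := ∃ j : Fin 3, zc (τ j) = 2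

/-- The inverse `Z⁻¹ = [τ₁⁻¹, τ₂⁻¹, τ₂τ₁]` of a bitrade in τ-representation
(`τ₂τ₁`, composed left to right, is `τ 0 * τ 1` in Lean's convention). -/
def ZInv (τ : Fin 3 → Equiv.Perm ℕ) : Fin 3 → Equiv.Perm ℕ :=
  ![(τ 0)⁻¹, (τ 1)⁻¹, τ 0 * τ 1]

/-- `SlideRel τ x j u τ'` says that `τ'` is the result of the slide expansion of
`τ` at the point `x ∈ Γ` in direction `j`, with new point `u ∉ Γ`.  Writing
`k = j+1`, `l = j+2`, `w = xτ_j`, `a = xτ_j⁻¹`, `b = wτ_j`, `z = xτ_k`,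
`y = wτ_l⁻¹`, the preconditions are that the `τ_j`-cycle through `x` has length at
least 3 and that the `τ_k`-cycle through `x` and the `τ_l`-cycle through `w` have
no common point; the new permutations send `a ↦ u ↦ b`, `x ↦ w ↦ x` (direction `j`),
insert `u` after `x` (direction `k`) and insert `u` between `y` and `w`
(direction `l`), agreeing with the old ones elsewhere. -/
def SlideRel (τ : Fin 3 → Equiv.Perm ℕ) (x : ℕ) (j : Fin 3) (u : ℕ)
    (τ' : Fin 3 → Equiv.Perm ℕ) : Prop :=
  x ∈ Gam τ ∧ u ∉ Gam τ ∧
  τ j x ≠ x ∧ τ j (τ j x) ≠ x ∧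
  (∀ p : ℕ, (τ (j + 1)).SameCycle x p → (τ (j + 2)).SameCycle (τ j x) p → False) ∧
  (τ' j ((τ j)⁻¹ x) = u ∧ τ' j u = τ j (τ j x) ∧
    τ' j x = τ j x ∧ τ' j (τ j x) = x ∧
    ∀ p : ℕ, p ≠ (τ j)⁻¹ x → p ≠ u → p ≠ x → p ≠ τ j x → τ' j p = τ j p) ∧
  (τ' (j + 1) x = u ∧ τ' (j + 1) u = τ (j + 1) x ∧
    ∀ p : ℕ, p ≠ x → p ≠ u → τ' (j + 1) p = τ (j + 1) p) ∧
  (τ' (j + 2) ((τ (j + 2))⁻¹ (τ j x)) = u ∧ τ' (j + 2) u = τ j x ∧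
    ∀ p : ℕ, p ≠ (τ (j + 2))⁻¹ (τ j x) → p ≠ u → τ' (j + 2) p = τ (j + 2) p)

set_option linter.unusedSectionVars false
set_option maxHeartbeats 1000000

open Equiv Equiv.Perm Subgroup

section OrbCount

variable {β : Type*} [Finite β] [DecidableEq β]

def orbRel (S : Set (Equiv.Perm β)) (x y : β) : Prop :=
  ∃ g ∈ Subgroup.closure S, g x = y

lemma orbRel_refl (S : Set (Equiv.Perm β)) (x : β) : orbRel S x x :=
  ⟨1, one_mem _, rfl⟩

lemma orbRel_symm {S : Set (Equiv.Perm β)} {x y : β} (h : orbRel S x y) : orbRel S y x := by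
  obtain ⟨g, hg, rfl⟩ := h
  exact ⟨g⁻¹, inv_mem hg, by simp⟩

lemma orbRel_trans {S : Set (Equiv.Perm β)} {x y z : β}
    (h : orbRel S x y) (h' : orbRel S y z) : orbRel S x z := by
  obtain ⟨g, hg, rfl⟩ := h
  obtain ⟨g', hg', rfl⟩ := h'
  exact ⟨g' * g, mul_mem hg' hg, rfl⟩

def orbSetoid (S : Set (Equiv.Perm β)) : Setoid β :=
  ⟨orbRel S, ⟨orbRel_refl S, orbRel_symm, orbRel_trans⟩⟩

noncomputable def nOrb (S : Set (Equiv.Perm β)) : ℕ :=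
  Nat.card (Quotient (orbSetoid S))

lemma orbRel_mono {S T : Set (Equiv.Perm β)} (h : Subgroup.closure S ≤ Subgroup.closure T)
    {x y : β} (hxy : orbRel S x y) : orbRel T x y := by
  obtain ⟨g, hg, rfl⟩ := hxy; exact ⟨g, h hg, rfl⟩

noncomputable def orbMap {S T : Set (Equiv.Perm β)}
    (h : Subgroup.closure S ≤ Subgroup.closure T) :
    Quotient (orbSetoid S) → Quotient (orbSetoid T) :=
  Quotient.map' id (fun _ _ hxy => orbRel_mono h hxy)

lemma orbMap_mk {S T : Set (Equiv.Perm β)} (h : Subgroup.closure S ≤ Subgroup.closure T)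
    (x : β) : orbMap h (Quotient.mk (orbSetoid S) x) = Quotient.mk (orbSetoid T) x := rfl

lemma orbMap_surjective {S T : Set (Equiv.Perm β)}
    (h : Subgroup.closure S ≤ Subgroup.closure T) : Function.Surjective (orbMap h) := by
  intro q
  obtain ⟨x, rfl⟩ := Quotient.exists_rep q
  exact ⟨Quotient.mk _ x, rfl⟩

lemma nOrb_le_nOrb {S T : Set (Equiv.Perm β)}
    (h : Subgroup.closure S ≤ Subgroup.closure T) : nOrb T ≤ nOrb S :=
  Nat.card_le_card_of_surjective _ (orbMap_surjective h)

lemma nOrb_lt_nOrb {S T : Set (Equiv.Perm β)}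
    (h : Subgroup.closure S ≤ Subgroup.closure T) {a b : β}
    (hT : orbRel T a b) (hS : ¬ orbRel S a b) : nOrb T < nOrb S := by
  rcases lt_or_eq_of_le (nOrb_le_nOrb h) with h' | h'
  · exact h'
  · exfalso
    have hbij : Function.Bijective (orbMap h) :=
      (Nat.bijective_iff_surjective_and_card _).2 ⟨orbMap_surjective h, h'.symm⟩
    have : Quotient.mk (orbSetoid S) a = Quotient.mk (orbSetoid S) b := by
      apply hbij.1
      rw [orbMap_mk, orbMap_mk]
      exact Quotient.sound' hT
    exact hS (Quotient.exact' this)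

/-- The orbit relation of `S` with the classes of `u` and `v` merged. -/
def mergeRel (S : Set (Equiv.Perm β)) (u v x y : β) : Prop :=
  orbRel S x y ∨ (orbRel S x u ∧ orbRel S v y) ∨ (orbRel S x v ∧ orbRel S u y)

lemma mergeRel_symm {S : Set (Equiv.Perm β)} {u v x y : β}
    (h : mergeRel S u v x y) : mergeRel S u v y x := by
  rcases h with h | ⟨h1, h2⟩ | ⟨h1, h2⟩
  · exact Or.inl (orbRel_symm h)
  · exact Or.inr (Or.inr ⟨orbRel_symm h2, orbRel_symm h1⟩)
  · exact Or.inr (Or.inl ⟨orbRel_symm h2, orbRel_symm h1⟩)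

lemma mergeRel_trans {S : Set (Equiv.Perm β)} {u v x y z : β}
    (h : mergeRel S u v x y) (h' : mergeRel S u v y z) : mergeRel S u v x z := by
  rcases h with h | ⟨h1, h2⟩ | ⟨h1, h2⟩ <;> rcases h' with h' | ⟨h1', h2'⟩ | ⟨h1', h2'⟩
  · exact Or.inl (orbRel_trans h h')
  · exact Or.inr (Or.inl ⟨orbRel_trans h h1', h2'⟩)
  · exact Or.inr (Or.inr ⟨orbRel_trans h h1', h2'⟩)
  · exact Or.inr (Or.inl ⟨h1, orbRel_trans h2 h'⟩)
  · exact Or.inl (orbRel_trans h1 (orbRel_trans (orbRel_symm (orbRel_trans h2 h1')) h2'))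
  · exact Or.inl (orbRel_trans h1 h2')
  · exact Or.inr (Or.inr ⟨h1, orbRel_trans h2 h'⟩)
  · exact Or.inl (orbRel_trans h1 h2')
  · exact Or.inl (orbRel_trans h1 (orbRel_trans (orbRel_symm (orbRel_trans h2 h1')) h2'))

lemma mergeRel_of_insert_swap {S : Set (Equiv.Perm β)} {u v : β} (huv : u ≠ v)
    {x y : β} (h : orbRel (insert (Equiv.swap u v) S) x y) : mergeRel S u v x y := by
  have key : ∀ g ∈ Subgroup.closure (insert (Equiv.swap u v) S),
      ∀ x : β, mergeRel S u v x (g x) := by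
    intro g hg
    refine Subgroup.closure_induction
      (p := fun g _ => ∀ x : β, mergeRel S u v x (g x)) ?_ ?_ ?_ ?_ hg
    · intro g hgmem x
      rcases hgmem with rfl | hgS
      · rcases eq_or_ne x u with rfl | hxu
        · rw [Equiv.swap_apply_left]
          exact Or.inr (Or.inl ⟨orbRel_refl _ _, orbRel_refl _ _⟩)
        rcases eq_or_ne x v with rfl | hxv
        · rw [Equiv.swap_apply_right]
          exact Or.inr (Or.inr ⟨orbRel_refl _ _, orbRel_refl _ _⟩)
        · rw [Equiv.swap_apply_of_ne_of_ne hxu hxv]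
          exact Or.inl (orbRel_refl _ _)
      · exact Or.inl ⟨g, Subgroup.subset_closure hgS, rfl⟩
    · intro x
      simp only [Equiv.Perm.one_apply]
      exact Or.inl (orbRel_refl _ _)
    · intro a b _ _ hpa hpb x
      exact mergeRel_trans (hpb x) (by simpa using hpa (b x))
    · intro a _ hpa x
      have := hpa (a⁻¹ x)
      simp only [show a (a⁻¹ x) = x from (Equiv.eq_symm_apply a).mp rfl] at this
      exact mergeRel_symm this
  obtain ⟨g, hg, rfl⟩ := h
  exact key g hg x

lemma nOrb_le_insert_swap_of_rel {S : Set (Equiv.Perm β)} {u v : β} (huv : u ≠ v)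
    (hrel : orbRel S u v) :
    nOrb S ≤ nOrb (insert (Equiv.swap u v) S) := by
  have hle : Subgroup.closure S ≤ Subgroup.closure (insert (Equiv.swap u v) S) :=
    Subgroup.closure_mono (Set.subset_insert _ _)
  apply Nat.card_le_card_of_injective (orbMap hle)
  intro a b
  induction a using Quotient.ind with | _ x =>
  induction b using Quotient.ind with | _ y =>
  intro hab
  have h2 := mergeRel_of_insert_swap huv (Quotient.exact hab)
  apply Quotient.sound
  rcases h2 with h | ⟨h1, h2⟩ | ⟨h1, h2⟩
  · exact h
  · exact orbRel_trans h1 (orbRel_trans hrel h2)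
  · exact orbRel_trans h1 (orbRel_trans (orbRel_symm hrel) h2)

lemma nOrb_le_insert_swap_add_one {S : Set (Equiv.Perm β)} {u v : β} (huv : u ≠ v) :
    nOrb S ≤ nOrb (insert (Equiv.swap u v) S) + 1 := by
  classical
  have hle : Subgroup.closure S ≤ Subgroup.closure (insert (Equiv.swap u v) S) :=
    Subgroup.closure_mono (Set.subset_insert _ _)
  let G : Quotient (orbSetoid S) → (Quotient (orbSetoid (insert (Equiv.swap u v) S))) ⊕ Unit :=
    fun q => if q = Quotient.mk (orbSetoid S) v then Sum.inr () else Sum.inl (orbMap hle q)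
  have hGinj : Function.Injective G := by
    intro a b hab
    by_cases hav : a = Quotient.mk (orbSetoid S) v <;>
      by_cases hbv : b = Quotient.mk (orbSetoid S) v
    · rw [hav, hbv]
    · simp only [G, if_pos hav, if_neg hbv] at hab; exact absurd hab (by simp)
    · simp only [G, if_neg hav, if_pos hbv] at hab; exact absurd hab (by simp)
    · simp only [G, if_neg hav, if_neg hbv, Sum.inl.injEq] at hab
      induction a using Quotient.ind with | _ x =>
      induction b using Quotient.ind with | _ y =>
      have h2 := mergeRel_of_insert_swap huv (Quotient.exact hab)
      rcases h2 with h | ⟨h1, h2⟩ | ⟨h1, h2⟩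
      · exact Quotient.sound h
      · exact absurd (Quotient.sound (orbRel_symm h2)) hbv
      · exact absurd (Quotient.sound h1) hav
  calc nOrb S ≤ Nat.card ((Quotient (orbSetoid (insert (Equiv.swap u v) S))) ⊕ Unit) :=
        Nat.card_le_card_of_injective G hGinj
    _ = nOrb (insert (Equiv.swap u v) S) + 1 := by
        rw [Nat.card_sum]; simp [nOrb]

/-- Number of cycles (including fixed points) of a permutation of a finite type. -/
noncomputable def zF (π : Equiv.Perm β) : ℕ := nOrb {π}

lemma orbRel_singleton {π : Equiv.Perm β} {x y : β} :
    orbRel {π} x y ↔ π.SameCycle x y := by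
  constructor
  · rintro ⟨g, hg, rfl⟩
    obtain ⟨n, rfl⟩ := Subgroup.mem_closure_singleton.mp hg
    exact ⟨n, rfl⟩
  · rintro ⟨n, hn⟩
    exact ⟨π ^ n, Subgroup.mem_closure_singleton.mpr ⟨n, rfl⟩, hn⟩

lemma nOrb_eq_card {S : Set (Equiv.Perm β)} (h : ∀ x y : β, orbRel S x y → x = y) :
    nOrb S = Nat.card β := by
  refine (Nat.card_eq_of_bijective (Quotient.mk (orbSetoid S)) ⟨?_, ?_⟩).symm
  · intro a b hab
    exact h a b (Quotient.exact hab)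
  · intro q
    obtain ⟨x, rfl⟩ := Quotient.exists_rep q
    exact ⟨x, rfl⟩

lemma zF_one : zF (1 : Equiv.Perm β) = Nat.card β := by
  apply nOrb_eq_card
  rintro x y ⟨g, hg, rfl⟩
  rw [Subgroup.closure_singleton_one, Subgroup.mem_bot] at hg
  rw [hg]; rfl

lemma nOrb_le_card (S : Set (Equiv.Perm β)) : nOrb S ≤ Nat.card β :=
  Nat.card_le_card_of_surjective (Quotient.mk (orbSetoid S))
    (fun q => by obtain ⟨x, rfl⟩ := Quotient.exists_rep q; exact ⟨x, rfl⟩)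

lemma zF_le_card (π : Equiv.Perm β) : zF π ≤ Nat.card β := nOrb_le_card _

lemma le_zF_swap_mul_add_one {π : Equiv.Perm β} {u v : β} (huv : u ≠ v) :
    zF π ≤ zF (Equiv.swap u v * π) + 1 := by
  have h1 : zF π ≤ nOrb (insert (Equiv.swap u v) {π}) + 1 := nOrb_le_insert_swap_add_one huv
  have h2 : nOrb (insert (Equiv.swap u v) {π}) ≤ zF (Equiv.swap u v * π) := by
    apply nOrb_le_nOrb
    rw [Subgroup.closure_le]
    intro g hg
    rw [Set.mem_singleton_iff] at hg
    subst hg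
    exact mul_mem (Subgroup.subset_closure (Set.mem_insert _ _))
      (Subgroup.subset_closure (Set.mem_insert_of_mem _ rfl))
  omega

lemma zF_swap_mul_le_add_one {π : Equiv.Perm β} {u v : β} (huv : u ≠ v) :
    zF (Equiv.swap u v * π) ≤ zF π + 1 := by
  have := le_zF_swap_mul_add_one (π := Equiv.swap u v * π) huv
  rwa [← mul_assoc, Equiv.swap_mul_self, one_mul] at this

lemma sameCycle_swap_mul {π : Equiv.Perm β} {u v : β} (h : ¬ π.SameCycle u v) :
    (Equiv.swap u v * π).SameCycle v u := by
  classical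
  have hex : ∃ m, 0 < m ∧ (π ^ m) v = v :=
    ⟨orderOf π, orderOf_pos π, by rw [pow_orderOf_eq_one]; rfl⟩
  obtain ⟨k, hkpos, hkv, hmin⟩ :
      ∃ k, 0 < k ∧ (π ^ k) v = v ∧ ∀ j, 0 < j → j < k → (π ^ j) v ≠ v := by
    refine ⟨Nat.find hex, (Nat.find_spec hex).1, (Nat.find_spec hex).2, ?_⟩
    intro j hj hjk hequ
    exact Nat.find_min hex hjk ⟨hj, hequ⟩
  have hne_u : ∀ j : ℕ, (π ^ j) v ≠ u := by
    intro j hju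
    exact h (Equiv.Perm.SameCycle.symm ⟨(j : ℤ), by rw [zpow_natCast]; exact hju⟩)
  have happ : ∀ j : ℕ, π ((π ^ j) v) = (π ^ (j + 1)) v := by
    intro j
    rw [pow_succ', Equiv.Perm.mul_apply]
  have hprefix : ∀ j, j < k → ((Equiv.swap u v * π) ^ j) v = (π ^ j) v := by
    intro j
    induction j with
    | zero => simp
    | succ n ih =>
      intro hn
      have hn' : n < k := Nat.lt_of_succ_lt hn
      have h1 : ((Equiv.swap u v * π) ^ (n + 1)) v
          = Equiv.swap u v (π ((π ^ n) v)) := by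
        rw [pow_succ']
        rw [Equiv.Perm.mul_apply, ih hn', Equiv.Perm.mul_apply]
      rw [h1, happ n]
      exact Equiv.swap_apply_of_ne_of_ne (hne_u (n + 1))
        (hmin (n + 1) (Nat.succ_pos n) hn)
  have hfinal : ((Equiv.swap u v * π) ^ k) v = u := by
    obtain ⟨k', rfl⟩ : ∃ k', k = k' + 1 := ⟨k - 1, by omega⟩
    rw [pow_succ', Equiv.Perm.mul_apply, hprefix k' (Nat.lt_succ_self k'),
      Equiv.Perm.mul_apply, happ k', hkv]
    exact Equiv.swap_apply_right u v
  exact ⟨(k : ℤ), by rw [zpow_natCast]; exact hfinal⟩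

lemma zF_swap_mul_lt {π : Equiv.Perm β} {u v : β} (h : ¬ π.SameCycle u v) :
    zF (Equiv.swap u v * π) < zF π := by
  have huv : u ≠ v := by rintro rfl; exact h (Equiv.Perm.SameCycle.refl _ _)
  set t := Equiv.swap u v with ht
  set g := t * π with hgdef
  have hπ : π = t * g := by rw [hgdef, ← mul_assoc, ht, Equiv.swap_mul_self, one_mul]
  have hcyc : g.SameCycle u v := (sameCycle_swap_mul h).symm
  have horb : orbRel {g} u v := orbRel_singleton.mpr hcyc
  have hA : zF g ≤ nOrb (insert t {g}) := nOrb_le_insert_swap_of_rel huv horb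
  have hle : Subgroup.closure {π} ≤ Subgroup.closure (insert t ({g} : Set (Equiv.Perm β))) := by
    rw [Subgroup.closure_le]
    intro x hx
    rw [Set.mem_singleton_iff] at hx
    subst hx
    rw [hπ]
    exact mul_mem (Subgroup.subset_closure (Set.mem_insert _ _))
      (Subgroup.subset_closure (Set.mem_insert_of_mem _ rfl))
  have hB : nOrb (insert t ({g} : Set (Equiv.Perm β))) < zF π := by
    apply nOrb_lt_nOrb hle
    · exact ⟨t, Subgroup.subset_closure (Set.mem_insert _ _), Equiv.swap_apply_left u v⟩
    · intro hr
      exact h (orbRel_singleton.mp hr)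
  omega

lemma zF_list_prod_ge (l : List (Equiv.Perm β)) (hl : ∀ t ∈ l, Equiv.Perm.IsSwap t) :
    Nat.card β ≤ zF l.prod + l.length := by
  induction l with
  | nil => rw [List.prod_nil, zF_one]; simp
  | cons t l' ih =>
    obtain ⟨u, v, huv, rfl⟩ := hl t (List.mem_cons_self (a := t) (l := l'))
    have ih' := ih (fun g hg => hl g (List.mem_cons_of_mem _ hg))
    have h1 : zF l'.prod ≤ zF (Equiv.swap u v * l'.prod) + 1 := le_zF_swap_mul_add_one huv
    rw [List.prod_cons, List.length_cons]
    omega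

lemma exists_factorization_aux :
    ∀ (m : ℕ) (π : Equiv.Perm β), Nat.card β - zF π ≤ m →
      ∃ l : List (Equiv.Perm β), (∀ t ∈ l, Equiv.Perm.IsSwap t) ∧ l.prod = π ∧
        l.length + zF π ≤ Nat.card β := by
  have key : ∀ (π : Equiv.Perm β), π ≠ 1 →
      ∃ x u, π x ≠ x ∧ (Equiv.swap x (π x) * π) x = x ∧
        zF π < zF (Equiv.swap x (π x) * π) ∧
        Equiv.swap x (π x) * (Equiv.swap x (π x) * π) = π ∧ u = x := by
    intro π hπ
    have hx : ∃ x, π x ≠ x := by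
      by_contra hcon
      push_neg at hcon
      exact hπ (Equiv.ext hcon)
    obtain ⟨x, hx⟩ := hx
    have hfix : (Equiv.swap x (π x) * π) x = x := by
      rw [Equiv.Perm.mul_apply]
      exact Equiv.swap_apply_right x (π x)
    have hcancel : Equiv.swap x (π x) * (Equiv.swap x (π x) * π) = π := by
      rw [← mul_assoc, Equiv.swap_mul_self, one_mul]
    have hnsc : ¬ (Equiv.swap x (π x) * π).SameCycle x (π x) := by
      rintro ⟨i, hi⟩
      rw [Equiv.Perm.zpow_apply_eq_self_of_apply_eq_self hfix] at hi
      exact hx hi.symm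
    have hlt : zF π < zF (Equiv.swap x (π x) * π) := by
      have := zF_swap_mul_lt hnsc
      rwa [hcancel] at this
    exact ⟨x, x, hx, hfix, hlt, hcancel, rfl⟩
  intro m
  induction m with
  | zero =>
    intro π hm
    rcases eq_or_ne π 1 with rfl | hπ
    · exact ⟨[], by simp, by simp, by rw [zF_one]; simp⟩
    · obtain ⟨x, -, hx, -, hlt, -, -⟩ := key π hπ
      have h2 : zF (Equiv.swap x (π x) * π) ≤ Nat.card β := zF_le_card _
      omega
  | succ m ih =>
    intro π hm
    rcases eq_or_ne π 1 with rfl | hπ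
    · exact ⟨[], by simp, by simp, by rw [zF_one]; simp⟩
    · obtain ⟨x, -, hx, -, hlt, hcancel, -⟩ := key π hπ
      have h2 : zF (Equiv.swap x (π x) * π) ≤ Nat.card β := zF_le_card _
      obtain ⟨l', hsw, hprod, hlen⟩ := ih (Equiv.swap x (π x) * π) (by omega)
      refine ⟨Equiv.swap x (π x) :: l', ?_, ?_, ?_⟩
      · intro t ht
        rcases List.mem_cons.mp ht with rfl | ht'
        · exact ⟨x, π x, Ne.symm hx, rfl⟩
        · exact hsw t ht'
      · rw [List.prod_cons, hprod, hcancel]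
      · rw [List.length_cons]
        omega

lemma exists_factorization (π : Equiv.Perm β) :
    ∃ l : List (Equiv.Perm β), (∀ t ∈ l, Equiv.Perm.IsSwap t) ∧ l.prod = π ∧
      l.length + zF π = Nat.card β := by
  obtain ⟨l, hsw, hprod, hlen⟩ :=
    exists_factorization_aux (Nat.card β - zF π) π le_rfl
  refine ⟨l, hsw, hprod, ?_⟩
  have := zF_list_prod_ge l hsw
  rw [hprod] at this
  omega

lemma list_prod_mem_closure (l : List (Equiv.Perm β)) :
    l.prod ∈ Subgroup.closure {g | g ∈ l} := by
  induction l with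
  | nil => rw [List.prod_nil]; exact one_mem _
  | cons t l' ih =>
    rw [List.prod_cons]
    refine mul_mem (Subgroup.subset_closure (List.mem_cons_self (a := t) (l := l'))) ?_
    exact Subgroup.closure_mono (fun g hg => List.mem_cons_of_mem _ hg) ih

lemma swap_list_bound (l : List (Equiv.Perm β)) (hl : ∀ t ∈ l, Equiv.Perm.IsSwap t) :
    Nat.card β + zF l.prod ≤ l.length + 2 * nOrb {g | g ∈ l} := by
  induction l with
  | nil =>
    have hno : nOrb {g : Equiv.Perm β | g ∈ ([] : List (Equiv.Perm β))} = Nat.card β := by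
      apply nOrb_eq_card
      rintro x y ⟨g, hg, rfl⟩
      have : {g : Equiv.Perm β | g ∈ ([] : List (Equiv.Perm β))} = ∅ := by simp
      rw [this, Subgroup.closure_empty, Subgroup.mem_bot] at hg
      rw [hg]; rfl
    rw [List.prod_nil, zF_one, hno]
    simp [Nat.two_mul]
  | cons t l' ih =>
    obtain ⟨u, v, huv, rfl⟩ := hl t (List.mem_cons_self (a := t) (l := l'))
    have ih' := ih (fun g hg => hl g (List.mem_cons_of_mem _ hg))
    have hset : {g : Equiv.Perm β | g ∈ Equiv.swap u v :: l'}
        = insert (Equiv.swap u v) {g : Equiv.Perm β | g ∈ l'} := by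
      ext g; simp [List.mem_cons, Set.mem_insert_iff]
    rw [List.prod_cons, List.length_cons, hset]
    by_cases hc : (l'.prod).SameCycle u v
    · obtain ⟨i, hi⟩ := hc
      have horb : orbRel {g : Equiv.Perm β | g ∈ l'} u v :=
        ⟨l'.prod ^ i, zpow_mem (list_prod_mem_closure l') i, hi⟩
      have hC2 : nOrb {g : Equiv.Perm β | g ∈ l'}
          ≤ nOrb (insert (Equiv.swap u v) {g : Equiv.Perm β | g ∈ l'}) :=
        nOrb_le_insert_swap_of_rel huv horb
      have ha : zF (Equiv.swap u v * l'.prod) ≤ zF l'.prod + 1 := zF_swap_mul_le_add_one huv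
      omega
    · have hlt : zF (Equiv.swap u v * l'.prod) < zF l'.prod := zF_swap_mul_lt hc
      have hC3 : nOrb {g : Equiv.Perm β | g ∈ l'}
          ≤ nOrb (insert (Equiv.swap u v) {g : Equiv.Perm β | g ∈ l'}) + 1 :=
        nOrb_le_insert_swap_add_one huv
      omega

end OrbCount

/-- For permutations `τ₁, τ₂, τ₃` of a finite nonempty set
`Γ = mov(τ₁) ∪ mov(τ₂) ∪ mov(τ₃)` satisfying (T1) `τ₁τ₂τ₃ = 1`, (T3) each `τ_i`
fixed-point-free on `Γ`, and (T4) `⟨τ₁, τ₂, τ₃⟩` transitive on `Γ`, the total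
number of cycles satisfies `z(τ₁) + z(τ₂) + z(τ₃) ≤ |Γ| + 2` and
`z(τ₁) + z(τ₂) + z(τ₃) ≡ |Γ| (mod 2)`; equivalently, the genus `g` defined by
Euler's formula `order = size + 2 − 2g` is a nonnegative integer. -/
theorem genus_nonneg_integer (τ : Fin 3 → Equiv.Perm ℕ)
    (hfin : (Gam τ).Finite) (hne : (Gam τ).Nonempty)
    (t1 : ∀ x, τ 2 (τ 1 (τ 0 x)) = x)
    (t3 : ∀ i : Fin 3, ∀ x ∈ Gam τ, τ i x ≠ x)
    (t4 : TransOn τ) :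
    zc (τ 0) + zc (τ 1) + zc (τ 2) ≤ Nat.card (Gam τ) + 2 ∧
    (zc (τ 0) + zc (τ 1) + zc (τ 2)) % 2 = Nat.card (Gam τ) % 2 := by
  classical
  have hsub : ∀ i : Fin 3, mov (τ i) ⊆ Gam τ := by
    intro i
    fin_cases i
    · exact fun x hx => Or.inl (Or.inl hx)
    · exact fun x hx => Or.inl (Or.inr hx)
    · exact fun x hx => Or.inr hx
  have hmov : ∀ i : Fin 3, mov (τ i) = Gam τ := by
    intro i
    refine Set.Subset.antisymm (hsub i) ?_
    intro x hx
    exact t3 i x hx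
  have hiff : ∀ i : Fin 3, ∀ x : ℕ, x ∈ Gam τ ↔ τ i x ∈ Gam τ := by
    intro i x
    rw [← hmov i]
    constructor
    · intro hx hcon
      exact hx ((τ i).injective hcon)
    · intro hx hcon
      apply hx
      show τ i (τ i x) = τ i x
      rw [hcon]
      exact hcon
  haveI : Finite ↥(Gam τ) := hfin.to_subtype
  set σ : Fin 3 → Equiv.Perm ↥(Gam τ) := fun i => (τ i).subtypePerm (fun x => (hiff i x).symm) with hσdef
  have hσapp : ∀ (i : Fin 3) (x : ↥(Gam τ)), ((σ i) x : ℕ) = τ i x.1 := fun i x => rfl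
  have hσzpow : ∀ (i : Fin 3) (k : ℤ) (x : ↥(Gam τ)), (((σ i) ^ k) x : ℕ) = (τ i ^ k) x.1 := by
    intro i k x
    rw [hσdef]
    simp only [Equiv.Perm.subtypePerm_zpow, Equiv.Perm.subtypePerm_apply]
  have hzc : ∀ i : Fin 3, zc (τ i) = zF (σ i) := by
    intro i
    unfold zc zF nOrb
    apply Nat.card_congr
    refine Quotient.congr (Equiv.setCongr (hmov i)) ?_
    intro a b
    show (τ i).SameCycle a.1 b.1 ↔ orbRel {σ i} (Equiv.setCongr (hmov i) a) (Equiv.setCongr (hmov i) b)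
    rw [orbRel_singleton]
    constructor
    · rintro ⟨k, hk⟩
      exact ⟨k, Subtype.ext (by rw [hσzpow]; exact hk)⟩
    · rintro ⟨k, hk⟩
      refine ⟨k, ?_⟩
      have := congrArg Subtype.val hk
      rwa [hσzpow] at this
  have hσ1 : σ 2 * σ 1 * σ 0 = 1 := by
    apply Equiv.ext
    intro x
    apply Subtype.ext
    show τ 2 (τ 1 (τ 0 x.1)) = x.1
    exact t1 x.1
  obtain ⟨l0, hsw0, hprod0, hlen0⟩ := exists_factorization (σ 0)
  obtain ⟨l1, hsw1, hprod1, hlen1⟩ := exists_factorization (σ 1)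
  obtain ⟨l2, hsw2, hprod2, hlen2⟩ := exists_factorization (σ 2)
  set L := l2 ++ (l1 ++ l0) with hLdef
  have hLsw : ∀ t ∈ L, Equiv.Perm.IsSwap t := by
    intro t ht
    rw [hLdef] at ht
    simp only [List.mem_append] at ht
    rcases ht with ht | ht | ht
    exacts [hsw2 t ht, hsw1 t ht, hsw0 t ht]
  have hLprod : L.prod = 1 := by
    rw [hLdef, List.prod_append, List.prod_append, hprod2, hprod1, hprod0,
      ← mul_assoc, hσ1]
  have hτclosure : ∀ g ∈ Subgroup.closure ({τ 0, τ 1, τ 2} : Set (Equiv.Perm ℕ)),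
      ∃ h ∈ Subgroup.closure ({σ 0, σ 1, σ 2} : Set (Equiv.Perm ↥(Gam τ))),
        ∀ a : ↥(Gam τ), (h a : ℕ) = g a.1 := by
    intro g hg
    refine Subgroup.closure_induction
      (p := fun g _ => ∃ h ∈ Subgroup.closure ({σ 0, σ 1, σ 2} : Set (Equiv.Perm ↥(Gam τ))),
        ∀ a : ↥(Gam τ), (h a : ℕ) = g a.1) ?_ ?_ ?_ ?_ hg
    · intro g hgm
      simp only [Set.mem_insert_iff, Set.mem_singleton_iff] at hgm
      rcases hgm with rfl | rfl | rfl
      · exact ⟨σ 0, Subgroup.subset_closure (by simp), fun a => rfl⟩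
      · exact ⟨σ 1, Subgroup.subset_closure (by simp), fun a => rfl⟩
      · exact ⟨σ 2, Subgroup.subset_closure (by simp), fun a => rfl⟩
    · exact ⟨1, one_mem _, fun a => rfl⟩
    · rintro g1 g2 _ _ ⟨h1, hm1, he1⟩ ⟨h2, hm2, he2⟩
      refine ⟨h1 * h2, mul_mem hm1 hm2, fun a => ?_⟩
      show ((h1 (h2 a)) : ℕ) = g1 (g2 a.1)
      rw [he1, he2]
    · rintro g _ ⟨h, hm, he⟩
      refine ⟨h⁻¹, inv_mem hm, fun a => ?_⟩
      have h2 := he (h⁻¹ a)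
      rw [show h (h⁻¹ a) = a from (Equiv.eq_symm_apply h).mp rfl] at h2
      show ((h⁻¹ a) : ℕ) = g⁻¹ a.1
      rw [h2, show g⁻¹ (g ↑(h⁻¹ a)) = ↑(h⁻¹ a) from Equiv.Perm.inv_eq_iff_eq.mpr rfl]
  have hsub2 : Subgroup.closure ({σ 0, σ 1, σ 2} : Set (Equiv.Perm ↥(Gam τ)))
      ≤ Subgroup.closure {g : Equiv.Perm ↥(Gam τ) | g ∈ L} := by
    rw [Subgroup.closure_le]
    intro g' hg'
    simp only [Set.mem_insert_iff, Set.mem_singleton_iff] at hg'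
    have hmem : ∀ l' : List (Equiv.Perm ↥(Gam τ)), (∀ t ∈ l', t ∈ L) →
        l'.prod ∈ Subgroup.closure {g : Equiv.Perm ↥(Gam τ) | g ∈ L} := by
      intro l' hl'
      exact Subgroup.closure_mono (fun g hgm => hl' g hgm) (list_prod_mem_closure l')
    rcases hg' with rfl | rfl | rfl
    · rw [← hprod0]
      exact hmem l0 (fun t ht => by rw [hLdef]; simp [ht])
    · rw [← hprod1]
      exact hmem l1 (fun t ht => by rw [hLdef]; simp [ht])
    · rw [← hprod2]
      exact hmem l2 (fun t ht => by rw [hLdef]; simp [ht])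
  have htotal : ∀ x y : ↥(Gam τ), orbRel {g : Equiv.Perm ↥(Gam τ) | g ∈ L} x y := by
    intro x y
    obtain ⟨g, hg, hgxy⟩ := t4 x.1 x.2 y.1 y.2
    obtain ⟨h, hm, he⟩ := hτclosure g hg
    exact ⟨h, hsub2 hm, Subtype.ext (by rw [he]; exact hgxy)⟩
  have hone : nOrb {g : Equiv.Perm ↥(Gam τ) | g ∈ L} = 1 := by
    rw [nOrb, Nat.card_eq_one_iff_unique]
    constructor
    · constructor
      intro a b
      induction a using Quotient.ind with | _ x =>
      induction b using Quotient.ind with | _ y =>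
      exact Quotient.sound (htotal x y)
    · exact ⟨Quotient.mk _ ⟨hne.choose, hne.choose_spec⟩⟩
  have hbound := swap_list_bound L hLsw
  rw [hLprod, zF_one, hone] at hbound
  have hlenL : L.length = l2.length + (l1.length + l0.length) := by
    rw [hLdef]; simp
  letI : Fintype ↥(Gam τ) := Fintype.ofFinite _
  have hsign := Equiv.Perm.sign_prod_list_swap hLsw
  rw [hLprod, Equiv.Perm.sign_one] at hsign
  have heven : Even L.length := by
    rcases Nat.even_or_odd L.length with he | ho
    · exact he
    · exfalso
      rw [ho.neg_one_pow] at hsign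
      have := congrArg (Units.val) hsign
      norm_num at this
  obtain ⟨c, hc⟩ := heven
  rw [hzc 0, hzc 1, hzc 2]
  have hcard : Nat.card (Gam τ) = Nat.card ↥(Gam τ) := rfl
  rw [hcard]
  omega
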